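/- arXiv:2503.12546 — 4 statements merged into one kernel-verified Lean document; each statement's English description precedes it below -/
import Mathlib

section
/- Let Φ = {c : aⱼᵀc ≤ bⱼ, j ∈ J} with aⱼ ≠ 0 and define the feasible set F_P = {(c,r) ∈ ℝ^l × ℝ : r ≥ 0, aⱼᵀc + ‖aⱼ‖r ≤ bⱼ ∀j}. Then the interior of Φ is nonempty if and only if the interior of F_P (in ℝ^{l+1}) is nonempty. -/
open scoped RealInnerProductSpace
open Filter Topology

/-- The polytope `Φ` has nonempty interior iff the lifted Chebyshev feasible set
`F_P = {(c, r) | r ≥ 0 ∧ ∀ j, ⟪a j, c⟫ + ‖a j‖ r ≤ b j}` has nonempty interior. -/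
theorem stmt3 (l N : ℕ) (a : Fin N → EuclideanSpace ℝ (Fin l)) (b : Fin N → ℝ)
    (ha : ∀ j, a j ≠ 0) :
    (interior {c : EuclideanSpace ℝ (Fin l) | ∀ j, ⟪a j, c⟫ ≤ b j}).Nonempty ↔
      (interior {z : EuclideanSpace ℝ (Fin l) × ℝ |
        0 ≤ z.2 ∧ ∀ j, ⟪a j, z.1⟫ + ‖a j‖ * z.2 ≤ b j}).Nonempty := by
  constructor
  · rintro ⟨c, hc⟩
    rw [mem_interior_iff_mem_nhds, Metric.mem_nhds_iff] at hc
    obtain ⟨ε, hε, hball⟩ := hc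
    have hstrict : ∀ j, ⟪a j, c⟫ < b j := by
      intro j
      have hna : (0:ℝ) < ‖a j‖ := norm_pos_iff.mpr (ha j)
      set t : ℝ := ε / (2 * ‖a j‖) with ht
      have htpos : 0 < t := div_pos hε (by positivity)
      have hmem : c + t • a j ∈ {c : EuclideanSpace ℝ (Fin l) | ∀ j, ⟪a j, c⟫ ≤ b j} := by
        apply hball
        rw [Metric.mem_ball, dist_eq_norm]
        have h1 : c + t • a j - c = t • a j := by abel
        rw [h1, norm_smul, Real.norm_eq_abs, abs_of_pos htpos, ht]
        have h2 : ε / (2 * ‖a j‖) * ‖a j‖ = ε / 2 := by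
          field_simp
        rw [h2]; linarith
      have h3 := hmem j
      rw [inner_add_right, real_inner_smul_right, real_inner_self_eq_norm_sq] at h3
      have : 0 < t * ‖a j‖ ^ 2 := by positivity
      linarith
    -- find small r > 0 keeping strict inequalities
    have hev : ∀ᶠ r in 𝓝[>] (0:ℝ), ∀ j, ⟪a j, c⟫ + ‖a j‖ * r < b j := by
      rw [Filter.eventually_all]
      intro j
      have hcont : Filter.Tendsto (fun r : ℝ => ⟪a j, c⟫ + ‖a j‖ * r) (𝓝[>] 0)
          (𝓝 (⟪a j, c⟫ + ‖a j‖ * 0)) := by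
        exact (Continuous.tendsto (by continuity) 0).mono_left nhdsWithin_le_nhds
      have : ⟪a j, c⟫ + ‖a j‖ * 0 < b j := by simpa using hstrict j
      exact hcont.eventually_lt_const this
    obtain ⟨r, hr, hrpos⟩ := (hev.and self_mem_nhdsWithin).exists
    have hU : IsOpen {z : EuclideanSpace ℝ (Fin l) × ℝ |
        0 < z.2 ∧ ∀ j, ⟪a j, z.1⟫ + ‖a j‖ * z.2 < b j} := by
      have heq : {z : EuclideanSpace ℝ (Fin l) × ℝ |
          0 < z.2 ∧ ∀ j, ⟪a j, z.1⟫ + ‖a j‖ * z.2 < b j} =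
          {z : EuclideanSpace ℝ (Fin l) × ℝ | 0 < z.2} ∩
          ⋂ j, {z : EuclideanSpace ℝ (Fin l) × ℝ | ⟪a j, z.1⟫ + ‖a j‖ * z.2 < b j} := by
        ext z; simp [Set.mem_iInter]
      rw [heq]
      refine (isOpen_lt continuous_const continuous_snd).inter
        (isOpen_iInter_of_finite fun j => isOpen_lt ?_ continuous_const)
      exact ((continuous_const.inner continuous_fst)).add
        (continuous_const.mul continuous_snd)
    have hsub : {z : EuclideanSpace ℝ (Fin l) × ℝ |
        0 < z.2 ∧ ∀ j, ⟪a j, z.1⟫ + ‖a j‖ * z.2 < b j} ⊆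
        {z : EuclideanSpace ℝ (Fin l) × ℝ |
        0 ≤ z.2 ∧ ∀ j, ⟪a j, z.1⟫ + ‖a j‖ * z.2 ≤ b j} := by
      rintro z ⟨h1, h2⟩
      exact ⟨le_of_lt h1, fun j => le_of_lt (h2 j)⟩
    exact ⟨(c, r), interior_maximal hsub hU ⟨hrpos, hr⟩⟩
  · rintro ⟨z, hz⟩
    have hz0 : 0 ≤ z.2 := (interior_subset hz).1
    rw [mem_interior_iff_mem_nhds, Metric.mem_nhds_iff] at hz
    obtain ⟨ε, hε, hball⟩ := hz
    have hmem : (z.1, z.2 + ε / 2) ∈ {z : EuclideanSpace ℝ (Fin l) × ℝ |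
        0 ≤ z.2 ∧ ∀ j, ⟪a j, z.1⟫ + ‖a j‖ * z.2 ≤ b j} := by
      apply hball
      rw [Metric.mem_ball, Prod.dist_eq]
      simp only [dist_self, dist_eq_norm]
      have : z.2 + ε / 2 - z.2 = ε / 2 := by ring
      rw [this, Real.norm_eq_abs, abs_of_pos (by linarith)]
      apply max_lt <;> linarith
    have hstrict : ∀ j, ⟪a j, z.1⟫ < b j := by
      intro j
      have hna : (0:ℝ) < ‖a j‖ := norm_pos_iff.mpr (ha j)
      have h := hmem.2 j
      have h2 : 0 < ‖a j‖ * (z.2 + ε / 2) := by positivity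
      linarith
    have hV : IsOpen {c : EuclideanSpace ℝ (Fin l) | ∀ j, ⟪a j, c⟫ < b j} := by
      have heq : {c : EuclideanSpace ℝ (Fin l) | ∀ j, ⟪a j, c⟫ < b j} =
          ⋂ j, {c : EuclideanSpace ℝ (Fin l) | ⟪a j, c⟫ < b j} := by
        ext c; simp [Set.mem_iInter]
      rw [heq]
      exact isOpen_iInter_of_finite fun j =>
        isOpen_lt (continuous_const.inner continuous_id) continuous_const
    have hsub2 : {c : EuclideanSpace ℝ (Fin l) | ∀ j, ⟪a j, c⟫ < b j} ⊆
        {c : EuclideanSpace ℝ (Fin l) | ∀ j, ⟪a j, c⟫ ≤ b j} := by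
      intro c hc j
      exact le_of_lt (hc j)
    exact ⟨z.1, interior_maximal hsub2 hV hstrict⟩
end

section
/- Let h : ℝⁿ → ℝ be locally Lipschitz and suppose the one-sided directional derivative h'(x; d) = lim_{σ→0⁺} (h(x+σd) − h(x))/σ exists for all x, d. If x : [0,T] → ℝⁿ is absolutely continuous with h'(x(t); ẋ(t)) ≥ −α·h(x(t)) for almost every t, where α > 0, and h(x(0)) ≥ 0, then h(x(t)) ≥ 0 for all t ∈ [0,T]. -/
open Filter

open MeasureTheory Set Metric

private lemma aux_unif_lip {E : Type*} [NormedAddCommGroup E] {h : E → ℝ}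
    (hLip : LocallyLipschitz h) {K : Set E} (hK : IsCompact K) :
    ∃ (L : NNReal) (ε : ℝ), 0 < ε ∧ ∀ p ∈ K, LipschitzOnWith L h (Metric.closedBall p ε) := by
  choose Lf t ht hlip using hLip
  choose r hr0 hrsub using fun v => Metric.mem_nhds_iff.mp (ht v)
  obtain ⟨s, -, hcov⟩ := hK.elim_nhds_subcover (fun v => Metric.ball v (r v / 2))
    (fun v _ => Metric.ball_mem_nhds v (half_pos (hr0 v)))
  rcases s.eq_empty_or_nonempty with rfl | hne
  · exact ⟨1, 1, one_pos, fun p hp => by simpa using hcov hp⟩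
  · refine ⟨s.sup Lf, s.inf' hne (fun v => r v / 2), ?_, ?_⟩
    · exact (Finset.lt_inf'_iff hne).2 fun v _ => half_pos (hr0 v)
    · intro p hp
      obtain ⟨v, hvs, hpv⟩ := Set.mem_iUnion₂.1 (hcov hp)
      have hsub : Metric.closedBall p (s.inf' hne fun v => r v / 2) ⊆ Metric.ball v (r v) := by
        intro z hz
        have h1 : dist z p ≤ r v / 2 := le_trans hz (Finset.inf'_le _ hvs)
        have h2 : dist p v < r v / 2 := by simpa [Metric.mem_ball] using hpv
        have := dist_triangle z p v
        simp only [Metric.mem_ball]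
        linarith
      have hl := (hlip v).mono (hsub.trans (hrsub v))
      exact fun u hu w hw => le_trans (hl hu hw)
        (mul_le_mul_left (ENNReal.coe_le_coe.2 (Finset.le_sup hvs)) _)

private lemma aux_slope_right {Z : ℝ → ℝ} (hZ : Continuous Z) {δ : ℕ → ℝ} (hδ0 : ∀ k, 0 < δ k)
    (hδ : Tendsto δ atTop (nhds 0)) (c : ℝ) :
    Tendsto (fun k => (∫ s in c..(c + δ k), Z s) / δ k) atTop (nhds (Z c)) := by
  have hP : ∀ u, HasDerivAt (fun u => ∫ s in (0:ℝ)..u, Z s) (Z u) u := fun u =>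
    (hZ.integral_hasStrictDerivAt 0 u).hasDerivAt
  have hs := hasDerivAt_iff_tendsto_slope.mp (hP c)
  have hcomp : Tendsto (fun k => c + δ k) atTop (nhdsWithin c {c}ᶜ) := by
    rw [tendsto_nhdsWithin_iff]
    constructor
    · simpa using tendsto_const_nhds.add hδ
    · exact Eventually.of_forall fun k => by simp [(hδ0 k).ne']
  apply (hs.comp hcomp).congr
  intro k
  have h2 : (∫ s in (0:ℝ)..(c + δ k), Z s) - ∫ s in (0:ℝ)..c, Z s
      = ∫ s in c..(c + δ k), Z s :=
    intervalIntegral.integral_interval_sub_left (hZ.intervalIntegrable _ _)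
      (hZ.intervalIntegrable _ _)
  simp only [Function.comp_apply, slope_def_field]
  rw [h2]
  ring_nf

private lemma aux_slope_left {Z : ℝ → ℝ} (hZ : Continuous Z) {δ : ℕ → ℝ} (hδ0 : ∀ k, 0 < δ k)
    (hδ : Tendsto δ atTop (nhds 0)) (c : ℝ) :
    Tendsto (fun k => (∫ s in (c - δ k)..c, Z s) / δ k) atTop (nhds (Z c)) := by
  have hP : ∀ u, HasDerivAt (fun u => ∫ s in (0:ℝ)..u, Z s) (Z u) u := fun u =>
    (hZ.integral_hasStrictDerivAt 0 u).hasDerivAt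
  have hs := hasDerivAt_iff_tendsto_slope.mp (hP c)
  have hcomp : Tendsto (fun k => c - δ k) atTop (nhdsWithin c {c}ᶜ) := by
    rw [tendsto_nhdsWithin_iff]
    constructor
    · simpa using tendsto_const_nhds.sub hδ
    · exact Eventually.of_forall fun k => by simp [(hδ0 k).ne']
  apply (hs.comp hcomp).congr
  intro k
  have h2 : (∫ s in (0:ℝ)..c, Z s) - ∫ s in (0:ℝ)..(c - δ k), Z s
      = ∫ s in (c - δ k)..c, Z s :=
    intervalIntegral.integral_interval_sub_left (hZ.intervalIntegrable _ _)
      (hZ.intervalIntegrable _ _)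
  simp only [Function.comp_apply, slope_def_field]
  have h3 : (∫ s in (0:ℝ)..(c - δ k), Z s) - ∫ s in (0:ℝ)..c, Z s
      = -∫ s in (c - δ k)..c, Z s := by rw [← h2]; ring
  rw [h3]
  have : c - δ k - c = -δ k := by ring
  rw [this, neg_div_neg_eq]



set_option maxHeartbeats 1000000 in
/-- Nonsmooth barrier comparison lemma: if `h` is locally Lipschitz with one-sided
directional derivative `D`, `x` is absolutely continuous on `[0, T]` (an integral of an
integrable derivative `x'`), the barrier inequality `D (x t) (x' t) ≥ -α h (x t)` holds
for almost every `t ∈ [0, T]` with `α > 0`, and `h (x 0) ≥ 0`, then `h (x t) ≥ 0` on `[0, T]`. -/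
theorem stmt11 (n : ℕ) (h : EuclideanSpace ℝ (Fin n) → ℝ)
    (hLip : LocallyLipschitz h)
    (D : EuclideanSpace ℝ (Fin n) → EuclideanSpace ℝ (Fin n) → ℝ)
    (hD : ∀ x d, Tendsto (fun σ : ℝ => (h (x + σ • d) - h x) / σ)
      (nhdsWithin 0 (Set.Ioi 0)) (nhds (D x d)))
    (T : ℝ) (hT : 0 < T) (x : ℝ → EuclideanSpace ℝ (Fin n))
    (x' : ℝ → EuclideanSpace ℝ (Fin n))
    (hx'int : MeasureTheory.IntegrableOn x' (Set.Icc 0 T))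
    (hAC : ∀ t ∈ Set.Icc 0 T, x t = x 0 + ∫ s in (0:ℝ)..t, x' s)
    (α : ℝ) (hα : 0 < α)
    (hineq : ∀ᵐ t ∂(MeasureTheory.volume.restrict (Set.Icc 0 T)),
      D (x t) (x' t) ≥ -α * h (x t))
    (h0 : 0 ≤ h (x 0)) :
    ∀ t ∈ Set.Icc 0 T, 0 ≤ h (x t) := by
  classical
  have hcont : Continuous h := hLip.continuous
  -- continuity of x on [0, T]
  have hxcont : ContinuousOn x (Icc 0 T) := by
    have h1 : ContinuousOn (fun t => x 0 + ∫ s in (0:ℝ)..t, x' s) (Icc 0 T) := by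
      apply continuousOn_const.add
      have h2 := intervalIntegral.continuousOn_primitive_interval
        (by rwa [uIcc_of_le hT.le] : IntegrableOn x' (uIcc 0 T) volume)
      rwa [uIcc_of_le hT.le] at h2
    exact h1.congr hAC
  -- clamped versions
  set π : ℝ → ℝ := fun t => min (max t 0) T with hπdef
  have hπmem : ∀ t, π t ∈ Icc 0 T := fun t => ⟨le_min (le_max_right t 0) hT.le, min_le_right _ _⟩
  have hπeq : ∀ t ∈ Icc 0 T, π t = t := fun t ht => by
    simp only [hπdef, max_eq_left ht.1, min_eq_left ht.2]
  have hπcont : Continuous π := (continuous_id.max continuous_const).min continuous_const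
  set xc : ℝ → EuclideanSpace ℝ (Fin n) := fun t => x (π t) with hxcdef
  have hxc : Continuous xc := hxcont.comp_continuous hπcont hπmem
  set Y : ℝ → ℝ := fun t => h (xc t) with hYdef
  have hYc : Continuous Y := hcont.comp hxc
  have hxceq : ∀ t ∈ Icc 0 T, xc t = x t := fun t ht => by rw [hxcdef]; simp [hπeq t ht]
  have hYeq : ∀ t ∈ Icc 0 T, Y t = h (x t) := fun t ht => by rw [hYdef]; simp [hxceq t ht]
  -- uniform Lipschitz constant along the path
  obtain ⟨L, ε, hε, hLipU⟩ := aux_unif_lip hLip (isCompact_Icc.image_of_continuousOn hxcont)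
  -- uniform continuity of the path
  have hUC := (isCompact_Icc.uniformContinuousOn_of_continuous hxcont)
  rw [Metric.uniformContinuousOn_iff_le] at hUC
  obtain ⟨δ₀, hδ₀pos, hδ₀⟩ := hUC ε hε
  -- the globalized derivative
  set f : ℝ → EuclideanSpace ℝ (Fin n) := (Icc 0 T).indicator x' with hfdef
  have hfint : Integrable f := by
    rw [hfdef, integrable_indicator_iff measurableSet_Icc]; exact hx'int
  have hfx' : ∀ t ∈ Icc 0 T, f t = x' t := fun t ht => indicator_of_mem ht x'
  -- Lebesgue points
  have hleb : ∀ᵐ s : ℝ, Tendsto (fun r => ⨍ u in closedBall s r, ‖f u - f s‖)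
      (nhdsWithin 0 (Set.Ioi 0)) (nhds 0) := by
    filter_upwards [(Besicovitch.vitaliFamily (volume : Measure ℝ)).ae_tendsto_average_norm_sub
      hfint.locallyIntegrable] with s hs
    exact hs.comp (Besicovitch.tendsto_filterAt volume s)
  -- bound on Y
  obtain ⟨M, hM⟩ := isCompact_Icc.exists_bound_of_continuousOn hYc.continuousOn
  have hM0 : 0 ≤ M := le_trans (norm_nonneg _) (hM 0 ⟨le_refl 0, hT.le⟩)
  -- interval integrability of x'
  have hx'ii : ∀ u v, u ∈ Icc 0 T → v ∈ Icc 0 T → IntervalIntegrable x' volume u v := by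
    intro u v hu hv
    apply IntegrableOn.intervalIntegrable
    exact hx'int.mono_set (uIcc_subset_Icc hu hv)
  have hxdiff : ∀ u v, u ∈ Icc 0 T → v ∈ Icc 0 T → x v - x u = ∫ s in u..v, x' s := by
    intro u v hu hv
    rw [hAC u hu, hAC v hv]
    have := intervalIntegral.integral_interval_sub_left (hx'ii 0 v ⟨le_refl 0, hT.le⟩ hv)
      (hx'ii 0 u ⟨le_refl 0, hT.le⟩ hu)
    rw [← this]; abel
  have hfcong : ∀ u v, u ∈ Icc 0 T → v ∈ Icc 0 T →
      (∫ s in u..v, ‖x' s - x' u‖) = ∫ s in u..v, ‖f s - f u‖ := by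
    intro u v hu hv
    apply intervalIntegral.integral_congr
    intro s hs
    show ‖x' s - x' u‖ = ‖f s - f u‖
    rw [hfx' s (uIcc_subset_Icc hu hv hs), hfx' u hu]
  have hineq' : ∀ᵐ s : ℝ, s ∈ Icc 0 T → -α * Y s ≤ D (x s) (x' s) := by
    filter_upwards [(ae_restrict_iff' measurableSet_Icc).mp hineq] with s hs hmem
    rw [hYeq s hmem]; exact hs hmem
  -- key inequality
  have key : ∀ a b : ℝ, 0 ≤ a → a < b → b ≤ T → Y a - α * ∫ s in a..b, Y s ≤ Y b := by
    intro a b ha0 hab hbT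
    have haI : a ∈ Icc 0 T := ⟨ha0, hab.le.trans hbT⟩
    have hbI : b ∈ Icc 0 T := ⟨ha0.trans hab.le, hbT⟩
    set C : ℝ := 2 * M / (b - a) with hCdef
    have hC0 : 0 ≤ C := div_nonneg (by linarith) (by linarith)
    have hCba : C * (b - a) = 2 * M := by
      rw [hCdef, div_mul_eq_mul_div, mul_div_assoc, div_self (sub_ne_zero.mpr hab.ne'), mul_one]
    set d : ℝ := min δ₀ ((b - a) / 2) with hddef
    have hd0 : 0 < d := lt_min hδ₀pos (half_pos (by linarith))
    set δ : ℕ → ℝ := fun k => d / (k + 2) with hδdef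
    have hδpos : ∀ k, 0 < δ k := fun k => div_pos hd0 (by positivity)
    have hδlt : ∀ k, δ k < d := fun k => div_lt_self hd0 (by have : (0:ℝ) ≤ (k:ℝ) := Nat.cast_nonneg k; linarith)
    have hδd₀ : ∀ k, δ k < δ₀ := fun k => (hδlt k).trans_le (min_le_left _ _)
    have hδba : ∀ k, δ k < (b - a) / 2 := fun k => (hδlt k).trans_le (min_le_right _ _)
    have habk : ∀ k, a < b - δ k := fun k => by have := hδba k; linarith
    have hδto : Tendsto δ atTop (nhds 0) := by
      apply Filter.Tendsto.div_atTop (tendsto_const_nhds)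
      exact tendsto_atTop_add_const_right _ 2 tendsto_natCast_atTop_atTop
    have hδmem : Tendsto δ atTop (nhdsWithin 0 (Set.Ioi 0)) :=
      tendsto_nhdsWithin_iff.mpr ⟨hδto, Eventually.of_forall fun k => hδpos k⟩
    -- the companion primitive
    have hgg : Integrable (fun s : ℝ => (L : ℝ) * ‖f s‖) := hfint.norm.const_mul _
    have hgint : ∀ u v : ℝ, IntervalIntegrable (fun s => (L : ℝ) * ‖f s‖ + C) volume u v :=
      fun u v => hgg.intervalIntegrable.add intervalIntegrable_const
    set Φ : ℝ → ℝ := fun t => ∫ s in (0:ℝ)..t, ((L : ℝ) * ‖f s‖ + C) with hΦdef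
    have hΦcont : Continuous Φ :=
      intervalIntegral.continuous_primitive (fun u v => hgint u v) 0
    have hΦdiff : ∀ u v : ℝ, Φ v - Φ u = ∫ s in u..v, ((L : ℝ) * ‖f s‖ + C) := fun u v =>
      intervalIntegral.integral_interval_sub_left (hgint 0 v) (hgint 0 u)
    have hΦsplit : ∀ u v : ℝ,
        (∫ s in u..v, ((L : ℝ) * ‖f s‖ + C)) = (L : ℝ) * (∫ s in u..v, ‖f s‖) + C * (v - u) := by
      intro u v
      rw [intervalIntegral.integral_add hgg.intervalIntegrable intervalIntegrable_const,
        intervalIntegral.integral_const, intervalIntegral.integral_const_mul]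
      simp [smul_eq_mul]; ring
    set Z : ℝ → ℝ := fun t => Y t + Φ t with hZdef
    have hZc : Continuous Z := hYc.add hΦcont
    -- norm of path increments
    have hxint : ∀ u v, u ∈ Icc 0 T → v ∈ Icc 0 T → u ≤ v →
        ‖x v - x u‖ ≤ ∫ s in u..v, ‖f s‖ := by
      intro u v hu hv huv
      rw [hxdiff u v hu hv]
      calc ‖∫ s in u..v, x' s‖ ≤ ∫ s in u..v, ‖x' s‖ :=
            intervalIntegral.norm_integral_le_integral_norm huv
        _ = ∫ s in u..v, ‖f s‖ := by
            apply intervalIntegral.integral_congr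
            intro s hs
            show ‖x' s‖ = ‖f s‖
            rw [hfx' s (uIcc_subset_Icc hu hv hs)]
    have hLdist := fun p hp => (lipschitzOnWith_iff_dist_le_mul.mp (hLipU p hp))
    -- Lipschitz control of Y increments
    have hYlip : ∀ u v, u ∈ Icc 0 T → v ∈ Icc 0 T → u ≤ v → v - u ≤ δ₀ →
        |Y v - Y u| ≤ (L : ℝ) * ∫ s in u..v, ‖f s‖ := by
      intro u v hu hv huv hsmall
      have hd1 : dist (x v) (x u) ≤ ε := hδ₀ v hv u hu
        (by rw [Real.dist_eq, abs_of_nonneg (by linarith)]; linarith)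
      have hmemu : x u ∈ closedBall (x u) ε := mem_closedBall_self hε.le
      have hmemv : x v ∈ closedBall (x u) ε := by rwa [mem_closedBall]
      calc |Y v - Y u| = dist (h (x v)) (h (x u)) := by
            rw [hYeq u hu, hYeq v hv, Real.dist_eq]
        _ ≤ (L : ℝ) * dist (x v) (x u) := hLdist (x u) ⟨u, hu, rfl⟩ (x v) hmemv (x u) hmemu
        _ = (L : ℝ) * ‖x v - x u‖ := by rw [dist_eq_norm]
        _ ≤ (L : ℝ) * ∫ s in u..v, ‖f s‖ :=
            mul_le_mul_of_nonneg_left (hxint u v hu hv huv) L.coe_nonneg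
    -- nonnegativity of the Z increments
    have hZnn : ∀ k, ∀ s ∈ Icc a (b - δ k), 0 ≤ (Z (s + δ k) - Z s) / δ k := by
      intro k s hs
      have hsbd : s + δ k ≤ b := by have := hs.2; linarith
      have hsI : s ∈ Icc 0 T := ⟨ha0.trans hs.1, by have := hs.2; nlinarith [hδpos k]⟩
      have hsδI : s + δ k ∈ Icc 0 T := ⟨by linarith [hsI.1, (hδpos k).le], hsbd.trans hbT⟩
      have h1 : |Y (s + δ k) - Y s| ≤ (L : ℝ) * ∫ u in s..(s + δ k), ‖f u‖ :=
        hYlip s (s + δ k) hsI hsδI (by linarith [(hδpos k).le])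
          (by linarith [(hδd₀ k).le])
      have h2 : Z (s + δ k) - Z s
          = (Y (s + δ k) - Y s) + ((L : ℝ) * (∫ u in s..(s + δ k), ‖f u‖) + C * δ k) := by
        have h3 := hΦdiff s (s + δ k)
        have h4 := hΦsplit s (s + δ k)
        simp only [hZdef]
        rw [show Y (s + δ k) + Φ (s + δ k) - (Y s + Φ s)
          = (Y (s + δ k) - Y s) + (Φ (s + δ k) - Φ s) by ring, h3, h4]
        ring_nf
      apply div_nonneg _ (hδpos k).le
      rw [h2]
      have h5 := (abs_le.1 h1).1
      have h6 : 0 ≤ C * δ k := mul_nonneg hC0 (hδpos k).le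
      linarith
    -- the sequence of functions for Fatou
    set F : ℕ → ℝ → ENNReal := fun k => (Icc a (b - δ k)).indicator
      (fun s => ENNReal.ofReal ((Z (s + δ k) - Z s) / δ k)) with hFdef
    have hZsc : ∀ k, Continuous (fun s => (Z (s + δ k) - Z s) / δ k) := fun k =>
      ((hZc.comp (continuous_add_right (δ k))).sub hZc).div_const _
    have hFmeas : ∀ k, Measurable (F k) := by
      intro k
      exact (ENNReal.measurable_ofReal.comp (hZsc k).measurable).indicator measurableSet_Icc
    have hFint : ∀ k, (∫⁻ s, F k s)
        = ENNReal.ofReal (((∫ s in (b - δ k)..b, Z s) / δ k)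
          - ((∫ s in a..(a + δ k), Z s) / δ k)) := by
      intro k
      rw [hFdef]
      simp only
      rw [lintegral_indicator measurableSet_Icc,
        ← ofReal_integral_eq_lintegral_ofReal ((hZsc k).integrableOn_Icc)
          ((ae_restrict_iff' measurableSet_Icc).2 (ae_of_all _ (hZnn k)))]
      congr 1
      rw [integral_Icc_eq_integral_Ioc, ← intervalIntegral.integral_of_le (habk k).le]
      have e1 : (∫ s in a..(b - δ k), (Z (s + δ k) - Z s) / δ k)
          = (∫ s in a..(b - δ k), (Z (s + δ k) - Z s)) / δ k :=
        intervalIntegral.integral_div _ _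
      have e2 : ∫ s in a..(b - δ k), (Z (s + δ k) - Z s)
          = (∫ s in a..(b - δ k), Z (s + δ k)) - ∫ s in a..(b - δ k), Z s :=
        intervalIntegral.integral_sub
          ((hZc.comp (continuous_add_right (δ k))).intervalIntegrable _ _)
          (hZc.intervalIntegrable _ _)
      have e3 : (∫ s in a..(b - δ k), Z (s + δ k)) = ∫ s in (a + δ k)..b, Z s := by
        rw [intervalIntegral.integral_comp_add_right]
        congr 1
        ring
      have e4 : ∫ s in (a + δ k)..b, Z s
          = (∫ s in (a + δ k)..(b - δ k), Z s) + ∫ s in (b - δ k)..b, Z s :=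
        (intervalIntegral.integral_add_adjacent_intervals (hZc.intervalIntegrable _ _)
          (hZc.intervalIntegrable _ _)).symm
      have e5 : ∫ s in a..(b - δ k), Z s
          = (∫ s in a..(a + δ k), Z s) + ∫ s in (a + δ k)..(b - δ k), Z s :=
        (intervalIntegral.integral_add_adjacent_intervals (hZc.intervalIntegrable _ _)
          (hZc.intervalIntegrable _ _)).symm
      rw [e1, e2, e3, e4, e5]
      ring
    have hFlim : Tendsto (fun k => ∫⁻ s, F k s) atTop (nhds (ENNReal.ofReal (Z b - Z a))) := by
      have h1 : Tendsto (fun k => ((∫ s in (b - δ k)..b, Z s) / δ k)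
          - ((∫ s in a..(a + δ k), Z s) / δ k)) atTop (nhds (Z b - Z a)) :=
        (aux_slope_left hZc hδpos hδto b).sub (aux_slope_right hZc hδpos hδto a)
      have h2 := (ENNReal.continuous_ofReal.tendsto _).comp h1
      apply h2.congr
      intro k
      exact (hFint k).symm
    have hliminf_val : liminf (fun k => ∫⁻ s, F k s) atTop = ENNReal.ofReal (Z b - Z a) :=
      hFlim.liminf_eq
    -- pointwise lower bound on the liminf
    have hptwise : ∀ᵐ s : ℝ, s ∈ Ioo a b →
        ENNReal.ofReal (-α * Y s + ((L : ℝ) * ‖f s‖ + C)) ≤ liminf (fun k => F k s) atTop := by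
      filter_upwards [hleb, hineq'] with s hlebs hineqs hsIoo
      have hsIcc : s ∈ Icc 0 T := ⟨ha0.trans hsIoo.1.le, hsIoo.2.le.trans hbT⟩
      -- the error control sequence
      set ρ : ℕ → ℝ := fun k => (∫ u in s..(s + δ k), ‖f u - f s‖) / δ k with hρdef
      have hfsint : ∀ (c r : ℝ), IntegrableOn (fun u => ‖f u - f s‖) (Icc c r) :=
        fun c r => ((hfint.integrableOn.sub
          (integrableOn_const measure_Icc_lt_top.ne)).norm)
      have hfsii : ∀ u v : ℝ, IntervalIntegrable (fun w => ‖f w - f s‖) volume u v := by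
        intro u v
        apply IntegrableOn.intervalIntegrable
        rw [Set.uIcc]
        exact hfsint _ _
      have hρnn : ∀ k, 0 ≤ ρ k := fun k => div_nonneg
        (intervalIntegral.integral_nonneg (by linarith [(hδpos k).le]) fun u _ => norm_nonneg _)
        (hδpos k).le
      have hρbound : ∀ k, ρ k ≤ 2 * ⨍ u in closedBall s (δ k), ‖f u - f s‖ := by
        intro k
        have h1 : (∫ u in s..(s + δ k), ‖f u - f s‖) = ∫ u in Ioc s (s + δ k), ‖f u - f s‖ :=
          intervalIntegral.integral_of_le (by linarith [(hδpos k).le])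
        have hsub1 : Ioc s (s + δ k) ⊆ closedBall s (δ k) := by
          intro u hu
          rw [Real.closedBall_eq_Icc]
          exact ⟨by linarith [hu.1.le, (hδpos k).le], hu.2⟩
        have h2 : (∫ u in Ioc s (s + δ k), ‖f u - f s‖)
            ≤ ∫ u in closedBall s (δ k), ‖f u - f s‖ :=
          setIntegral_mono_set (by rw [Real.closedBall_eq_Icc]; exact hfsint _ _)
            (ae_of_all _ fun u => norm_nonneg _) (HasSubset.Subset.eventuallyLE hsub1)
        have h4 : (volume (closedBall s (δ k))).toReal = 2 * δ k := by
          rw [Real.volume_closedBall, ENNReal.toReal_ofReal (by positivity)]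
        have h3 : (⨍ u in closedBall s (δ k), ‖f u - f s‖)
            = (2 * δ k)⁻¹ * ∫ u in closedBall s (δ k), ‖f u - f s‖ := by
          rw [setAverage_eq, measureReal_def, h4, smul_eq_mul]
        rw [hρdef, h3]
        simp only
        rw [h1]
        rw [div_le_iff₀ (hδpos k)]
        have hk := hδpos k
        calc (∫ u in Ioc s (s + δ k), ‖f u - f s‖)
            ≤ ∫ u in closedBall s (δ k), ‖f u - f s‖ := h2
          _ = 2 * ((2 * δ k)⁻¹ * ∫ u in closedBall s (δ k), ‖f u - f s‖) * δ k := by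
              field_simp
      have hρ0 : Tendsto ρ atTop (nhds 0) := by
        apply squeeze_zero hρnn hρbound
        have h5 := hlebs.comp hδmem
        have h6 := h5.const_mul (2:ℝ)
        simpa using h6
      -- eventual facts
      have hev1 : ∀ᶠ k in atTop, δ k < b - s :=
        hδto.eventually (eventually_lt_nhds (by linarith [hsIoo.2] : (0:ℝ) < b - s))
      have hev2 : ∀ᶠ k in atTop, δ k * ‖x' s‖ ≤ ε := by
        have h7 : Tendsto (fun k => δ k * ‖x' s‖) atTop (nhds 0) := by
          simpa using hδto.mul_const ‖x' s‖
        exact h7.eventually (eventually_le_nhds hε)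
      -- the directional-derivative part
      have hmain : Tendsto (fun k => (h (x s + δ k • x' s) - h (x s)) / δ k) atTop
          (nhds (D (x s) (x' s))) := (hD (x s) (x' s)).comp hδmem
      -- the error part
      have herr : Tendsto (fun k => (Y (s + δ k) - Y s) / δ k
          - (h (x s + δ k • x' s) - h (x s)) / δ k) atTop (nhds 0) := by
        have haux : Tendsto (fun k => (L : ℝ) * ρ k) atTop (nhds 0) := by
          simpa using hρ0.const_mul (L : ℝ)
        apply squeeze_zero_norm' ?_ haux
        filter_upwards [hev1, hev2] with k hk1 hk2
        have hsδI : s + δ k ∈ Icc 0 T :=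
          ⟨by linarith [hsIcc.1, (hδpos k).le], by linarith [hsIoo.2.le.trans hbT]⟩
        have hY1 : Y (s + δ k) = h (x (s + δ k)) := hYeq _ hsδI
        have hY2 : Y s = h (x s) := hYeq _ hsIcc
        have hsubint : IntervalIntegrable x' volume s (s + δ k) := hx'ii s (s + δ k) hsIcc hsδI
        have hconst : (∫ u in s..(s + δ k), x' s) = δ k • x' s := by
          rw [intervalIntegral.integral_const]
          congr 1
          ring
        have hxe : ‖x (s + δ k) - (x s + δ k • x' s)‖ ≤ ∫ u in s..(s + δ k), ‖f u - f s‖ := by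
          have h8 : x (s + δ k) - (x s + δ k • x' s)
              = ∫ u in s..(s + δ k), (x' u - x' s) := by
            rw [intervalIntegral.integral_sub hsubint intervalIntegrable_const, hconst,
              ← hxdiff s (s + δ k) hsIcc hsδI]
            abel
          rw [h8]
          calc ‖∫ u in s..(s + δ k), (x' u - x' s)‖ ≤ ∫ u in s..(s + δ k), ‖x' u - x' s‖ :=
                intervalIntegral.norm_integral_le_integral_norm (by linarith [(hδpos k).le])
            _ = ∫ u in s..(s + δ k), ‖f u - f s‖ := by
                apply intervalIntegral.integral_congr
                intro u hu
                show ‖x' u - x' s‖ = ‖f u - f s‖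
                rw [hfx' u (uIcc_subset_Icc hsIcc hsδI hu), hfx' s hsIcc]
        have hball1 : x (s + δ k) ∈ closedBall (x s) ε := by
          rw [mem_closedBall]
          exact hδ₀ (s + δ k) hsδI s hsIcc
            (by rw [Real.dist_eq, abs_of_nonneg (by linarith [(hδpos k).le])]
                linarith [(hδd₀ k).le])
        have hball2 : x s + δ k • x' s ∈ closedBall (x s) ε := by
          rw [mem_closedBall, dist_eq_norm]
          rw [show x s + δ k • x' s - x s = δ k • x' s by abel, norm_smul,
            Real.norm_eq_abs, abs_of_pos (hδpos k)]
          exact hk2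
        have hhh : dist (h (x (s + δ k))) (h (x s + δ k • x' s))
            ≤ (L : ℝ) * ‖x (s + δ k) - (x s + δ k • x' s)‖ := by
          rw [← dist_eq_norm]
          exact hLdist (x s) ⟨s, hsIcc, rfl⟩ _ hball1 _ hball2
        have h9 : (Y (s + δ k) - Y s) / δ k - (h (x s + δ k • x' s) - h (x s)) / δ k
            = (h (x (s + δ k)) - h (x s + δ k • x' s)) / δ k := by
          rw [hY1, hY2]
          ring
        rw [h9, Real.norm_eq_abs, abs_div, abs_of_pos (hδpos k)]
        simp only [hρdef]
        rw [← mul_div_assoc]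
        apply (div_le_div_iff_of_pos_right (hδpos k)).2
        calc |h (x (s + δ k)) - h (x s + δ k • x' s)|
            ≤ (L : ℝ) * ‖x (s + δ k) - (x s + δ k • x' s)‖ := by
              rw [← Real.dist_eq]; exact hhh
          _ ≤ (L : ℝ) * ∫ u in s..(s + δ k), ‖f u - f s‖ :=
              mul_le_mul_of_nonneg_left hxe L.coe_nonneg
      have hq : Tendsto (fun k => (Y (s + δ k) - Y s) / δ k) atTop
          (nhds (D (x s) (x' s))) := by
        have h10 := herr.add hmain
        rw [zero_add] at h10
        apply h10.congr
        intro k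
        ring
      have hψ : Tendsto (fun k => (Φ (s + δ k) - Φ s) / δ k) atTop
          (nhds ((L : ℝ) * ‖f s‖ + C)) := by
        have hb2 : Tendsto (fun k => (∫ u in s..(s + δ k), ‖f u‖) / δ k - ‖f s‖) atTop
            (nhds 0) := by
          apply squeeze_zero_norm ?_ hρ0
          intro k
          have h11 : (∫ u in s..(s + δ k), ‖f u‖) / δ k - ‖f s‖
              = (∫ u in s..(s + δ k), (‖f u‖ - ‖f s‖)) / δ k := by
            rw [intervalIntegral.integral_sub hfint.norm.intervalIntegrable
              intervalIntegrable_const, intervalIntegral.integral_const, smul_eq_mul,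
              show s + δ k - s = δ k by ring, sub_div, mul_comm, mul_div_assoc,
              div_self (hδpos k).ne', mul_one]
          rw [h11, Real.norm_eq_abs, abs_div, abs_of_pos (hδpos k)]
          simp only [hρdef]
          apply (div_le_div_iff_of_pos_right (hδpos k)).2
          calc |∫ u in s..(s + δ k), (‖f u‖ - ‖f s‖)|
              ≤ ∫ u in s..(s + δ k), ‖(‖f u‖ - ‖f s‖)‖ := by
                rw [← Real.norm_eq_abs]
                exact intervalIntegral.norm_integral_le_integral_norm
                  (by linarith [(hδpos k).le])
            _ ≤ ∫ u in s..(s + δ k), ‖f u - f s‖ := by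
                apply intervalIntegral.integral_mono_on (by linarith [(hδpos k).le])
                  (by
                    apply IntegrableOn.intervalIntegrable
                    rw [Set.uIcc]
                    exact (hfint.norm.integrableOn.sub
                      (integrableOn_const measure_Icc_lt_top.ne)).norm)
                  (hfsii _ _)
                intro u _
                rw [Real.norm_eq_abs]
                exact abs_norm_sub_norm_le _ _
        have h14 : Tendsto (fun k => (L : ℝ) * ((∫ u in s..(s + δ k), ‖f u‖) / δ k - ‖f s‖)
            + ((L : ℝ) * ‖f s‖ + C)) atTop (nhds ((L : ℝ) * ‖f s‖ + C)) := by
          have h15 := (hb2.const_mul (L : ℝ)).add_const ((L : ℝ) * ‖f s‖ + C)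
          simpa using h15
        apply h14.congr
        intro k
        rw [hΦdiff, hΦsplit, show s + δ k - s = δ k by ring, add_div,
          mul_div_assoc, mul_div_assoc, div_self (hδpos k).ne', mul_one]
        ring
      have hZq := hq.add hψ
      have hZq' : Tendsto (fun k => (Z (s + δ k) - Z s) / δ k) atTop
          (nhds (D (x s) (x' s) + ((L : ℝ) * ‖f s‖ + C))) := by
        apply hZq.congr
        intro k
        simp only [hZdef]
        ring
      have hFev : ∀ᶠ k in atTop, F k s = ENNReal.ofReal ((Z (s + δ k) - Z s) / δ k) := by
        filter_upwards [hev1] with k hk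
        have hmem : s ∈ Icc a (b - δ k) := ⟨hsIoo.1.le, by linarith⟩
        exact indicator_of_mem hmem _
      have hlim2 : Tendsto (fun k => F k s) atTop
          (nhds (ENNReal.ofReal (D (x s) (x' s) + ((L : ℝ) * ‖f s‖ + C)))) :=
        ((ENNReal.continuous_ofReal.tendsto _).comp hZq').congr'
          (hFev.mono fun k hk => hk.symm)
      rw [hlim2.liminf_eq]
      apply ENNReal.ofReal_le_ofReal
      have h15 := hineqs hsIcc
      linarith
    -- assemble everything
    set G : ℝ → ℝ := fun s => -α * Y s + ((L : ℝ) * ‖f s‖ + C) with hGdef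
    have hGint : IntegrableOn G (Ioo a b) := by
      apply Integrable.add
      · exact ((continuous_const.mul hYc).integrableOn_Icc).mono_set Ioo_subset_Icc_self
      · exact hgg.integrableOn.add (integrableOn_const measure_Ioo_lt_top.ne)
    have hZba : Z b - Z a
        = (Y b - Y a) + ((L : ℝ) * (∫ s in a..b, ‖f s‖) + C * (b - a)) := by
      simp only [hZdef]
      rw [show Y b + Φ b - (Y a + Φ a) = (Y b - Y a) + (Φ b - Φ a) by ring,
        hΦdiff a b, hΦsplit a b]
    have h8 : ∫⁻ s in Ioo a b, ENNReal.ofReal (G s) ≤ ENNReal.ofReal (Z b - Z a) := by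
      calc ∫⁻ s in Ioo a b, ENNReal.ofReal (G s)
          ≤ ∫⁻ s in Ioo a b, liminf (fun k => F k s) atTop :=
            lintegral_mono_ae ((ae_restrict_iff' measurableSet_Ioo).2 hptwise)
        _ ≤ ∫⁻ s, liminf (fun k => F k s) atTop := setLIntegral_le_lintegral _ _
        _ ≤ liminf (fun k => ∫⁻ s, F k s) atTop := lintegral_liminf_le hFmeas
        _ = ENNReal.ofReal (Z b - Z a) := hliminf_val
    have hmax : IntegrableOn (fun s => max (G s) 0) (Ioo a b) := hGint.pos_part
    have h9 : ENNReal.ofReal (∫ s in Ioo a b, G s)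
        ≤ ∫⁻ s in Ioo a b, ENNReal.ofReal (G s) := by
      calc ENNReal.ofReal (∫ s in Ioo a b, G s)
          ≤ ENNReal.ofReal (∫ s in Ioo a b, max (G s) 0) :=
            ENNReal.ofReal_le_ofReal (integral_mono hGint hmax (fun s => le_max_left _ _))
        _ = ∫⁻ s in Ioo a b, ENNReal.ofReal (max (G s) 0) :=
            ofReal_integral_eq_lintegral_ofReal hmax (ae_of_all _ fun s => le_max_right _ _)
        _ = ∫⁻ s in Ioo a b, ENNReal.ofReal (G s) := by
            apply lintegral_congr
            intro s
            rcases le_total (G s) 0 with hg | hg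
            · rw [max_eq_right hg, ENNReal.ofReal_of_nonpos hg, ENNReal.ofReal_zero]
            · rw [max_eq_left hg]
    have hfnn : 0 ≤ ∫ s in a..b, ‖f s‖ :=
      intervalIntegral.integral_nonneg hab.le (fun u _ => norm_nonneg _)
    have h10 : 0 ≤ Z b - Z a := by
      have hYb := hM b hbI
      have hYa := hM a haI
      rw [Real.norm_eq_abs] at hYb hYa
      rw [hZba, hCba]
      have hb1 := (abs_le.1 hYb).1
      have ha1 := (abs_le.1 hYa).2
      nlinarith [mul_nonneg (L.coe_nonneg) hfnn]
    have h11 : ∫ s in Ioo a b, G s ≤ Z b - Z a :=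
      (ENNReal.ofReal_le_ofReal_iff h10).1 (h9.trans h8)
    have h12 : ∫ s in Ioo a b, G s
        = -α * (∫ s in a..b, Y s) + ((L : ℝ) * (∫ s in a..b, ‖f s‖) + C * (b - a)) := by
      rw [← integral_Ioc_eq_integral_Ioo, ← intervalIntegral.integral_of_le hab.le]
      rw [hGdef]
      simp only
      rw [intervalIntegral.integral_add
        ((hYc.intervalIntegrable a b).const_mul (-α)) (hgint a b), hΦsplit a b,
        intervalIntegral.integral_const_mul]
    rw [h12, hZba] at h11
    linarith

  -- final argument
  by_contra hcon
  push_neg at hcon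
  obtain ⟨t1, ht1, hneg⟩ := hcon
  have hYt1 : Y t1 < 0 := by rw [hYeq t1 ht1]; exact hneg
  have ht1pos : 0 < t1 := by
    rcases lt_or_eq_of_le ht1.1 with h' | h'
    · exact h'
    · exfalso; rw [hYeq t1 ht1, ← h'] at hYt1; exact absurd h0 (not_le.2 hYt1)
  set S : Set ℝ := {t | t ∈ Icc 0 t1 ∧ 0 ≤ Y t} with hSdef
  have hS0 : (0:ℝ) ∈ S := ⟨⟨le_refl 0, ht1pos.le⟩, by rw [hYeq 0 ⟨le_refl 0, hT.le⟩]; exact h0⟩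
  have hSbdd : BddAbove S := ⟨t1, fun t ht => ht.1.2⟩
  have hSclosed : IsClosed S := by
    have : S = Icc 0 t1 ∩ Y ⁻¹' (Ici 0) := by ext t; simp [hSdef, and_comm]
    rw [this]
    exact isClosed_Icc.inter (isClosed_Ici.preimage hYc)
  set t0 : ℝ := sSup S with ht0def
  have ht0S : t0 ∈ S := hSclosed.csSup_mem ⟨0, hS0⟩ hSbdd
  have ht0Icc : t0 ∈ Icc 0 t1 := ht0S.1
  have ht0Y : 0 ≤ Y t0 := ht0S.2
  have ht0lt : t0 < t1 := by
    rcases lt_or_eq_of_le ht0Icc.2 with h' | h'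
    · exact h'
    · exfalso; rw [h'] at ht0Y; linarith
  have hYneg : ∀ t, t0 < t → t ≤ t1 → Y t < 0 := by
    intro t htt0 htt1
    by_contra hge
    push_neg at hge
    have : t ∈ S := ⟨⟨le_trans ht0Icc.1 (le_of_lt htt0), htt1⟩, hge⟩
    exact absurd (le_csSup hSbdd this) (not_le.2 htt0)
  have hkey := key t0 t1 ht0Icc.1 ht0lt (le_trans ht1.2 (le_refl T))
  have hint : (∫ s in t0..t1, Y s) ≤ 0 := by
    rw [intervalIntegral.integral_of_le ht0lt.le]
    apply integral_nonpos_of_ae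
    filter_upwards [ae_restrict_mem measurableSet_Ioc] with t ht
    exact (hYneg t ht.1 ht.2).le
  nlinarith [hkey, mul_nonneg hα.le (neg_nonneg.2 hint)]
end

section
/- Let v(t) := h(x(t)) where h is locally Lipschitz with directional derivatives and x is differentiable at t. Then the right derivative of v at t exists and equals h'(x(t); ẋ(t)). -/
open Filter

/-- If `h` is locally Lipschitz with one-sided directional derivative `D` and `x` is
differentiable at `t`, then `v = h ∘ x` has a right derivative at `t` equal to
`h'(x(t); ẋ(t)) = D (x t) (ẋ t)`. -/
theorem stmt12 (n : ℕ) (h : EuclideanSpace ℝ (Fin n) → ℝ)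
    (hLip : LocallyLipschitz h)
    (D : EuclideanSpace ℝ (Fin n) → EuclideanSpace ℝ (Fin n) → ℝ)
    (hD : ∀ x d, Tendsto (fun σ : ℝ => (h (x + σ • d) - h x) / σ)
      (nhdsWithin 0 (Set.Ioi 0)) (nhds (D x d)))
    (x : ℝ → EuclideanSpace ℝ (Fin n)) (t : ℝ) (xdot : EuclideanSpace ℝ (Fin n))
    (hx : HasDerivAt x xdot t) :
    Tendsto (fun σ : ℝ => (h (x (t + σ)) - h (x t)) / σ)
      (nhdsWithin 0 (Set.Ioi 0)) (nhds (D (x t) xdot)) := by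
  obtain ⟨K, s, hs, hK⟩ := hLip (x t)
  have htrans : Tendsto (fun σ : ℝ => t + σ) (nhdsWithin 0 (Set.Ioi 0)) (nhds t) := by
    have : Tendsto (fun σ : ℝ => t + σ) (nhds (0:ℝ)) (nhds t) := by
      simpa using tendsto_const_nhds.add (tendsto_id (x := nhds (0:ℝ)))
    exact this.mono_left nhdsWithin_le_nhds
  have hxc : Tendsto (fun σ : ℝ => x (t + σ)) (nhdsWithin 0 (Set.Ioi 0)) (nhds (x t)) :=
    hx.continuousAt.tendsto.comp htrans
  have hyc : Tendsto (fun σ : ℝ => x t + σ • xdot) (nhdsWithin 0 (Set.Ioi 0)) (nhds (x t)) := by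
    have hc : Continuous fun σ : ℝ => x t + σ • xdot := by continuity
    have := hc.tendsto 0
    simp only [zero_smul, add_zero] at this
    exact this.mono_left nhdsWithin_le_nhds
  -- little-o fact
  have hlo : (fun σ : ℝ => x (t + σ) - x t - σ • xdot) =o[nhds (0:ℝ)] (fun σ => σ) := by
    have h1 := (hasDerivAt_iff_isLittleO.mp hx)
    have h2 : Tendsto (fun σ : ℝ => t + σ) (nhds (0:ℝ)) (nhds t) := by
      simpa using tendsto_const_nhds.add (tendsto_id (x := nhds (0:ℝ)))
    have := h1.comp_tendsto h2
    simp only [Function.comp_def, add_sub_cancel_left] at this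
    exact this
  have hnorm : Tendsto (fun σ : ℝ => ‖x (t + σ) - x t - σ • xdot‖ / σ)
      (nhdsWithin 0 (Set.Ioi 0)) (nhds 0) :=
    (hlo.norm_left.tendsto_div_nhds_zero).mono_left nhdsWithin_le_nhds
  -- error term tends to 0
  have herr : Tendsto (fun σ : ℝ => (h (x (t + σ)) - h (x t + σ • xdot)) / σ)
      (nhdsWithin 0 (Set.Ioi 0)) (nhds 0) := by
    have hKnorm : Tendsto (fun σ : ℝ => (K : ℝ) * (‖x (t + σ) - x t - σ • xdot‖ / σ))
        (nhdsWithin 0 (Set.Ioi 0)) (nhds 0) := by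
      simpa using hnorm.const_mul (K : ℝ)
    apply squeeze_zero_norm' _ hKnorm
    have hmem1 : ∀ᶠ σ in nhdsWithin (0:ℝ) (Set.Ioi 0), x (t + σ) ∈ s := hxc hs
    have hmem2 : ∀ᶠ σ in nhdsWithin (0:ℝ) (Set.Ioi 0), x t + σ • xdot ∈ s := hyc hs
    have hpos : ∀ᶠ σ in nhdsWithin (0:ℝ) (Set.Ioi 0), (0:ℝ) < σ :=
      eventually_mem_nhdsWithin
    filter_upwards [hmem1, hmem2, hpos] with σ h1 h2 h3
    have hd := hK.dist_le_mul _ h1 _ h2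
    rw [Real.dist_eq, dist_eq_norm] at hd
    have hxdiff : x (t + σ) - (x t + σ • xdot) = x (t + σ) - x t - σ • xdot := by
      abel
    rw [hxdiff] at hd
    have : ‖(h (x (t + σ)) - h (x t + σ • xdot)) / σ‖
        = |h (x (t + σ)) - h (x t + σ • xdot)| / σ := by
      rw [norm_div, Real.norm_eq_abs, Real.norm_eq_abs, abs_of_pos h3]
    rw [this, ← mul_div_assoc]
    exact div_le_div_of_nonneg_right hd h3.le
  have hmain := hD (x t) xdot
  have hsum := herr.add hmain
  rw [zero_add] at hsum
  refine hsum.congr (fun σ => ?_)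
  rw [← add_div]
  ring_nf
end

section
/- Let F : ℝⁿ ⇒ ℝ^m be defined by F(x) = {z : g_j(z,x) ≤ 0, j ∈ J} with each g_j jointly continuous and convex in z. Fix x̄ such that F(x̄) is nonempty with nonempty interior (Slater point). Then F is lower semicontinuous at x̄: for every open set U with U ∩ F(x̄) ≠ ∅, there is a neighborhood V of x̄ such that U ∩ F(x) ≠ ∅ for all x ∈ V. -/
/-- Lower semicontinuity of the parametric feasible-set map
`F x = {z | g j z x ≤ 0 ∀ j}` at a point `x̄` satisfying the Slater condition,
with each `g j` jointly continuous and convex in `z`. -/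
theorem stmt14 (n m M : ℕ)
    (g : Fin M → EuclideanSpace ℝ (Fin m) → EuclideanSpace ℝ (Fin n) → ℝ)
    (hgcont : ∀ j, Continuous fun p : EuclideanSpace ℝ (Fin m) × EuclideanSpace ℝ (Fin n) =>
      g j p.1 p.2)
    (hgconv : ∀ j x, ConvexOn ℝ Set.univ fun z => g j z x)
    (F : EuclideanSpace ℝ (Fin n) → Set (EuclideanSpace ℝ (Fin m)))
    (hF : ∀ x, F x = {z | ∀ j, g j z x ≤ 0})
    (x₀ : EuclideanSpace ℝ (Fin n))
    (hSlater : ∃ z₀, ∀ j, g j z₀ x₀ < 0) :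
    ∀ U : Set (EuclideanSpace ℝ (Fin m)), IsOpen U → (U ∩ F x₀).Nonempty →
      ∃ V ∈ nhds x₀, ∀ x ∈ V, (U ∩ F x).Nonempty := by
  intro U hU ⟨z, hzU, hzF⟩
  obtain ⟨z₀, hz₀⟩ := hSlater
  rw [hF] at hzF
  -- the segment map
  have hcont : Continuous fun t : ℝ => (1 - t) • z + t • z₀ := by
    continuity
  have h0 : ((1 : ℝ) - 0) • z + (0 : ℝ) • z₀ = z := by simp
  have hmem : ∀ᶠ t : ℝ in nhds 0, ((1 - t) • z + t • z₀) ∈ U := by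
    have := hcont.continuousAt (x := (0 : ℝ))
    have h := this (hU.mem_nhds (by simpa using hzU))
    exact h
  obtain ⟨ε, hε, hball⟩ := Metric.eventually_nhds_iff_ball.mp hmem
  set t : ℝ := min (ε / 2) (1 / 2) with ht
  have ht0 : 0 < t := lt_min (by linarith) (by norm_num)
  have ht1 : t ≤ 1 / 2 := min_le_right _ _
  have htε : t < ε := lt_of_le_of_lt (min_le_left _ _) (by linarith)
  set w : EuclideanSpace ℝ (Fin m) := (1 - t) • z + t • z₀ with hw
  have hwU : w ∈ U := by
    apply hball
    simp [abs_of_pos ht0, htε]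
  have hwlt : ∀ j, g j w x₀ < 0 := by
    intro j
    have hc := (hgconv j x₀).2 (Set.mem_univ z) (Set.mem_univ z₀)
      (by linarith : (0:ℝ) ≤ 1 - t) ht0.le (by ring)
    have h1 : (1 - t) * g j z x₀ ≤ 0 :=
      mul_nonpos_of_nonneg_of_nonpos (by linarith) (hzF j)
    have h2 : t * g j z₀ x₀ < 0 := mul_neg_of_pos_of_neg ht0 (hz₀ j)
    calc g j w x₀ ≤ (1 - t) * g j z x₀ + t * g j z₀ x₀ := hc
      _ < 0 := by linarith
  have hV : ∀ᶠ x in nhds x₀, ∀ j, g j w x < 0 := by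
    rw [Filter.eventually_all]
    intro j
    have hc : Continuous fun x => g j w x := (hgcont j).comp (continuous_const.prodMk continuous_id)
    exact hc.continuousAt.eventually_lt continuousAt_const (hwlt j)
  refine ⟨{x | ∀ j, g j w x < 0}, hV, fun x hx => ⟨w, hwU, ?_⟩⟩
  rw [hF]
  exact fun j => (hx j).le
end
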